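/- Two Gaussian generating functions of the form G(z) = ∏_i [λ'_i/(λ'_i+z/2)]^{k_i/2} e^{-z d_i² λ'_i/(2(λ'_i+z/2))} (with distinct λ'_i > 0, k_i ∈ ℕ₊, d_i ≥ 0) agreeing on a neighborhood of 0 must have identical parameter families {(λ'_i, k_i, d_i)}. -/

import Mathlib

open Real BigOperators

section AuxIndep
open Polynomial

lemma indep_single (s : Finset ℝ) (A : ℝ → ℝ) (δ : ℝ) (hδ : 0 < δ)
    (hs : ∀ t ∈ s, δ ≤ t)
    (h : ∀ w ∈ Set.Ioo (-δ) δ, ∑ t ∈ s, A t / (t + w) = 0) :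
    ∀ t ∈ s, A t = 0 := by
  classical
  have hpos : ∀ t ∈ s, ∀ w ∈ Set.Ioo (-δ) δ, 0 < t + w := by
    intro t ht w hw; have := hs t ht; have := hw.1; linarith
  set p : Polynomial ℝ := ∑ t ∈ s, C (A t) * ∏ u ∈ s.erase t, (C u + X) with hp
  have heval : ∀ z : ℝ, p.eval z = ∑ t ∈ s, A t * ∏ u ∈ s.erase t, (u + z) := by
    intro z; simp [hp, Polynomial.eval_finset_sum, Polynomial.eval_prod]
  have hp0 : p = 0 := by
    refine Polynomial.eq_zero_of_infinite_isRoot p ?_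
    refine Set.Infinite.mono ?_ (Set.Ioo_infinite (show -δ < δ by linarith))
    intro w hw
    show p.IsRoot w
    have hmul : ∀ t ∈ s, A t * ∏ u ∈ s.erase t, (u + w)
        = A t / (t + w) * ∏ u ∈ s, (u + w) := by
      intro t ht
      rw [← Finset.prod_erase_mul s _ ht]
      have hne := (hpos t ht w hw).ne'
      field_simp
    rw [Polynomial.IsRoot, heval, Finset.sum_congr rfl hmul, ← Finset.sum_mul, h w hw,
      zero_mul]
  intro t ht
  have h0 := heval (-t)
  rw [hp0] at h0
  simp only [Polynomial.eval_zero] at h0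
  rw [Finset.sum_eq_single_of_mem t ht (fun b hb hbt => ?_)] at h0
  · have hprod : ∏ u ∈ s.erase t, (u + -t) ≠ 0 := by
      refine Finset.prod_ne_zero_iff.mpr fun u hu => ?_
      have h1 : u ≠ t := (Finset.mem_erase.mp hu).1
      intro hc; apply h1; linarith
    rcases mul_eq_zero.mp h0.symm with h | h
    · exact h
    · exact absurd h hprod
  · exact mul_eq_zero_of_right _
      (Finset.prod_eq_zero (Finset.mem_erase.mpr ⟨hbt.symm, ht⟩) (by ring))



lemma indep_pair (s : Finset ℝ) (A B : ℝ → ℝ) (δ : ℝ) (hδ : 0 < δ)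
    (hs : ∀ t ∈ s, δ ≤ t)
    (h : ∀ w ∈ Set.Ioo (-δ) δ,
      ∑ t ∈ s, (A t / (t + w) + B t / (t + w) ^ 2) = 0) :
    ∀ t ∈ s, A t = 0 ∧ B t = 0 := by
  classical
  have hpos : ∀ t ∈ s, ∀ w ∈ Set.Ioo (-δ) δ, 0 < t + w := by
    intro t ht w hw; have := hs t ht; have := hw.1; linarith
  set p : Polynomial ℝ :=
    ∑ t ∈ s, (C (A t) * (C t + X) + C (B t)) * ∏ u ∈ s.erase t, (C u + X) ^ 2 with hp
  have heval : ∀ z : ℝ,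
      p.eval z = ∑ t ∈ s, (A t * (t + z) + B t) * ∏ u ∈ s.erase t, (u + z) ^ 2 := by
    intro z; simp [hp, Polynomial.eval_finset_sum, Polynomial.eval_prod]
  have hp0 : p = 0 := by
    refine Polynomial.eq_zero_of_infinite_isRoot p ?_
    refine Set.Infinite.mono ?_ (Set.Ioo_infinite (show -δ < δ by linarith))
    intro w hw
    show p.IsRoot w
    have hmul : ∀ t ∈ s, (A t * (t + w) + B t) * ∏ u ∈ s.erase t, (u + w) ^ 2
        = (A t / (t + w) + B t / (t + w) ^ 2) * ∏ u ∈ s, (u + w) ^ 2 := by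
      intro t ht
      rw [← Finset.prod_erase_mul s _ ht]
      have hne := (hpos t ht w hw).ne'
      field_simp
    rw [Polynomial.IsRoot, heval, Finset.sum_congr rfl hmul, ← Finset.sum_mul, h w hw,
      zero_mul]
  have hB : ∀ t ∈ s, B t = 0 := by
    intro t ht
    have h0 := heval (-t)
    rw [hp0] at h0
    simp only [Polynomial.eval_zero] at h0
    rw [Finset.sum_eq_single_of_mem t ht (fun b hb hbt => ?_)] at h0
    · have hprod : ∏ u ∈ s.erase t, (u + -t) ^ 2 ≠ 0 := by
        refine Finset.prod_ne_zero_iff.mpr fun u hu => ?_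
        have h1 : u ≠ t := (Finset.mem_erase.mp hu).1
        refine pow_ne_zero _ fun hc => h1 (by linarith)
      have h2 : A t * (t + -t) + B t = 0 := by
        rcases mul_eq_zero.mp h0.symm with h | h
        · exact h
        · exact absurd h hprod
      have h3 : t + -t = 0 := by ring
      rw [h3, mul_zero, zero_add] at h2
      exact h2
    · exact mul_eq_zero_of_right _
        (Finset.prod_eq_zero (Finset.mem_erase.mpr ⟨hbt.symm, ht⟩)
          (by rw [show t + -t = 0 by ring]; ring))
  have hA : ∀ t ∈ s, A t = 0 := by
    refine indep_single s A δ hδ hs fun w hw => ?_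
    have := h w hw
    rwa [Finset.sum_congr rfl fun t ht => by
      rw [hB t ht, zero_div, add_zero]] at this
  exact fun t ht => ⟨hA t ht, hB t ht⟩

end AuxIndep

noncomputable def Gfun {N : ℕ} (lam : Fin N → ℝ) (k : Fin N → ℕ)
    (d : Fin N → ℝ) (z : ℝ) : ℝ :=
  ∏ i, (lam i / (lam i + z/2)) ^ ((k i : ℝ) / 2) *
    Real.exp (-(z * (d i)^2 * lam i) / (2 * (lam i + z/2)))

noncomputable def Hfun {N : ℕ} (lam : Fin N → ℝ) (k : Fin N → ℕ)
    (d : Fin N → ℝ) : ℝ → ℝ := fun z =>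
  ∑ i, ((k i : ℝ)/2 * (Real.log (lam i) - Real.log (lam i + z/2))
    - z * d i ^ 2 * lam i / (2 * (lam i + z/2)))

noncomputable def Lfun {N : ℕ} (lam : Fin N → ℝ) (k : Fin N → ℕ)
    (d : Fin N → ℝ) : ℝ → ℝ := fun w =>
  ∑ i, (-(k i : ℝ)/4 / (lam i + w) - d i ^ 2 * lam i ^ 2 / (2 * (lam i + w) ^ 2))

lemma log_Gfun {N : ℕ} (lam : Fin N → ℝ) (k : Fin N → ℕ) (d : Fin N → ℝ) (z : ℝ)
    (hlam : ∀ i, 0 < lam i) (hpos : ∀ i, 0 < lam i + z/2) :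
    Real.log (Gfun lam k d z) = Hfun lam k d z := by
  unfold Gfun Hfun
  rw [Real.log_prod]
  · refine Finset.sum_congr rfl fun i _ => ?_
    rw [Real.log_mul (Real.rpow_pos_of_pos (div_pos (hlam i) (hpos i)) _).ne'
        (Real.exp_pos _).ne',
      Real.log_rpow (div_pos (hlam i) (hpos i)), Real.log_exp,
      Real.log_div (hlam i).ne' (hpos i).ne']
    ring
  · intro i _
    exact (mul_pos (Real.rpow_pos_of_pos (div_pos (hlam i) (hpos i)) _)
      (Real.exp_pos _)).ne'

lemma hasDerivAt_Hfun {N : ℕ} (lam : Fin N → ℝ) (k : Fin N → ℕ) (d : Fin N → ℝ)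
    (z : ℝ) (hpos : ∀ i, 0 < lam i + z/2) :
    HasDerivAt (Hfun lam k d) (Lfun lam k d (z/2)) z := by
  have E : Lfun lam k d (z/2) = ∑ i : Fin N,
      ((k i : ℝ)/2 * (0 - (lam i + z/2)⁻¹ * (1/2))
        - ((1 * d i ^ 2 * lam i) * (2 * (lam i + z/2))
            - (z * d i ^ 2 * lam i) * (2 * (1/2))) / (2 * (lam i + z/2)) ^ 2) := by
    unfold Lfun
    refine Finset.sum_congr rfl fun i _ => ?_
    have h := (hpos i).ne'
    have h2 : lam i * 2 + z ≠ 0 := fun hc => h (by linarith)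
    field_simp [h2]
    ring
  rw [E]
  unfold Hfun
  refine HasDerivAt.fun_sum fun i _ => ?_
  have h1 : HasDerivAt (fun z : ℝ => lam i + z/2) (1/2) z := by
    simpa using ((hasDerivAt_id z).div_const 2).const_add (lam i)
  have hne := (hpos i).ne'
  have h2 : HasDerivAt (fun z : ℝ => Real.log (lam i + z/2))
      ((lam i + z/2)⁻¹ * (1/2)) z := by
    have := (Real.hasDerivAt_log hne).comp z h1; exact this
  have h3 : HasDerivAt
      (fun z : ℝ => (k i : ℝ)/2 * (Real.log (lam i) - Real.log (lam i + z/2)))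
      ((k i : ℝ)/2 * (0 - (lam i + z/2)⁻¹ * (1/2))) z := by
    exact (((hasDerivAt_const z (Real.log (lam i))).sub h2).const_mul _)
  have hnum : HasDerivAt (fun z : ℝ => z * d i ^ 2 * lam i) (1 * d i ^ 2 * lam i) z := by
    exact ((hasDerivAt_id z).mul_const (d i ^ 2)).mul_const (lam i)
  have hden : HasDerivAt (fun z : ℝ => 2 * (lam i + z/2)) (2 * (1/2)) z :=
    h1.const_mul 2
  have hden_ne : 2 * (lam i + z/2) ≠ 0 := by
    have := hpos i; positivity
  exact h3.sub (hnum.div hden hden_ne)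

noncomputable def coefA {N : ℕ} (lam : Fin N → ℝ) (k : Fin N → ℕ) : ℝ → ℝ :=
  fun t => ∑ i, if lam i = t then -(k i : ℝ)/4 else 0

noncomputable def coefB {N : ℕ} (lam : Fin N → ℝ) (d : Fin N → ℝ) : ℝ → ℝ :=
  fun t => ∑ i, if lam i = t then -(d i ^ 2 * lam i ^ 2)/2 else 0

lemma lift_sum {N : ℕ} (lam : Fin N → ℝ) (c : Fin N → ℝ) (s : Finset ℝ)
    (hsub : ∀ i, lam i ∈ s) (g : ℝ → ℝ) :
    ∑ t ∈ s, (∑ i, if lam i = t then c i else 0) * g t = ∑ i, c i * g (lam i) := by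
  classical
  have e1 : ∀ t ∈ s, (∑ i, if lam i = t then c i else 0) * g t
      = ∑ i, if lam i = t then c i * g (lam i) else 0 := by
    intro t _
    rw [Finset.sum_mul]
    refine Finset.sum_congr rfl fun i _ => ?_
    split
    · next h => rw [h]
    · simp
  rw [Finset.sum_congr rfl e1, Finset.sum_comm]
  refine Finset.sum_congr rfl fun i _ => ?_
  rw [Finset.sum_ite_eq s (lam i) (fun _ => c i * g (lam i)), if_pos (hsub i)]

lemma sum_coef_eq_Lfun {N : ℕ} (lam : Fin N → ℝ) (k : Fin N → ℕ) (d : Fin N → ℝ)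
    (s : Finset ℝ) (hsub : ∀ i, lam i ∈ s) (w : ℝ) :
    ∑ t ∈ s, (coefA lam k t * (t + w)⁻¹ + coefB lam d t * ((t + w) ^ 2)⁻¹)
      = Lfun lam k d w := by
  unfold coefA coefB Lfun
  rw [Finset.sum_add_distrib,
    lift_sum lam _ s hsub (fun t => (t + w)⁻¹),
    lift_sum lam _ s hsub (fun t => ((t + w) ^ 2)⁻¹),
    ← Finset.sum_add_distrib]
  refine Finset.sum_congr rfl fun i _ => ?_
  simp only [div_eq_mul_inv, mul_inv]
  ring

lemma coefA_eval {N : ℕ} (lam : Fin N → ℝ) (k : Fin N → ℕ)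
    (hinj : Function.Injective lam) (i : Fin N) :
    coefA lam k (lam i) = -(k i : ℝ)/4 := by
  unfold coefA
  rw [Finset.sum_eq_single_of_mem i (Finset.mem_univ i)
    (fun j _ hne => if_neg fun hc => hne (hinj hc))]
  simp

lemma coefB_eval {N : ℕ} (lam : Fin N → ℝ) (d : Fin N → ℝ)
    (hinj : Function.Injective lam) (i : Fin N) :
    coefB lam d (lam i) = -(d i ^ 2 * lam i ^ 2)/2 := by
  unfold coefB
  rw [Finset.sum_eq_single_of_mem i (Finset.mem_univ i)
    (fun j _ hne => if_neg fun hc => hne (hinj hc))]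
  simp

lemma coefA_eval_not {N : ℕ} (lam : Fin N → ℝ) (k : Fin N → ℕ) (t : ℝ)
    (h : ∀ i, lam i ≠ t) : coefA lam k t = 0 :=
  Finset.sum_eq_zero fun i _ => if_neg (h i)

/-- two Gaussian generating functions agreeing on a neighborhood
of `0` have identical parameter families `{(λ'_i, k_i, d_i)}`. -/
theorem normal_params_determined_by_G (N₁ N₂ : ℕ)
    (lam₁ : Fin N₁ → ℝ) (k₁ : Fin N₁ → ℕ) (d₁ : Fin N₁ → ℝ)
    (lam₂ : Fin N₂ → ℝ) (k₂ : Fin N₂ → ℕ) (d₂ : Fin N₂ → ℝ)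
    (hlam₁ : ∀ i, 0 < lam₁ i) (hlam₂ : ∀ i, 0 < lam₂ i)
    (hinj₁ : Function.Injective lam₁) (hinj₂ : Function.Injective lam₂)
    (hk₁ : ∀ i, 0 < k₁ i) (hk₂ : ∀ i, 0 < k₂ i)
    (hd₁ : ∀ i, 0 ≤ d₁ i) (hd₂ : ∀ i, 0 ≤ d₂ i)
    (ε : ℝ) (hε : 0 < ε)
    (heq : ∀ z : ℝ, |z| < ε → Gfun lam₁ k₁ d₁ z = Gfun lam₂ k₂ d₂ z) :
    ∃ σ : Fin N₁ ≃ Fin N₂, ∀ i,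
      lam₂ (σ i) = lam₁ i ∧ k₂ (σ i) = k₁ i ∧ d₂ (σ i) = d₁ i := by
  classical
  obtain ⟨δ, hδ0, hδε, hδ1, hδ2⟩ :
      ∃ δ : ℝ, 0 < δ ∧ δ ≤ ε ∧ (∀ i, δ ≤ lam₁ i) ∧ (∀ j, δ ≤ lam₂ j) := by
    set T : Finset ℝ := insert ε (Finset.univ.image lam₁ ∪ Finset.univ.image lam₂)
      with hT
    have hTne : T.Nonempty := ⟨ε, Finset.mem_insert_self _ _⟩
    refine ⟨T.min' hTne, ?_, ?_, ?_, ?_⟩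
    · rw [Finset.lt_min'_iff]
      intro b hb
      simp only [hT, Finset.mem_insert, Finset.mem_union, Finset.mem_image,
        Finset.mem_univ, true_and] at hb
      rcases hb with rfl | ⟨i, rfl⟩ | ⟨j, rfl⟩
      exacts [hε, hlam₁ i, hlam₂ j]
    · exact Finset.min'_le _ _ (Finset.mem_insert_self _ _)
    · intro i
      refine Finset.min'_le _ _ ?_
      simp only [hT, Finset.mem_insert, Finset.mem_union, Finset.mem_image,
        Finset.mem_univ, true_and]
      exact Or.inr (Or.inl ⟨i, rfl⟩)
    · intro j
      refine Finset.min'_le _ _ ?_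
      simp only [hT, Finset.mem_insert, Finset.mem_union, Finset.mem_image,
        Finset.mem_univ, true_and]
      exact Or.inr (Or.inr ⟨j, rfl⟩)
  have hpos₁ : ∀ z ∈ Set.Ioo (-δ) δ, ∀ i, 0 < lam₁ i + z/2 := by
    intro z hz i; have := hδ1 i; have := hz.1; linarith
  have hpos₂ : ∀ z ∈ Set.Ioo (-δ) δ, ∀ j, 0 < lam₂ j + z/2 := by
    intro z hz j; have := hδ2 j; have := hz.1; linarith
  have hHeq : ∀ z ∈ Set.Ioo (-δ) δ, Hfun lam₁ k₁ d₁ z = Hfun lam₂ k₂ d₂ z := by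
    intro z hz
    rw [← log_Gfun lam₁ k₁ d₁ z hlam₁ (hpos₁ z hz),
      ← log_Gfun lam₂ k₂ d₂ z hlam₂ (hpos₂ z hz),
      heq z (abs_lt.mpr ⟨by linarith [hz.1], by linarith [hz.2]⟩)]
  have hLw : ∀ w ∈ Set.Ioo (-(δ/2)) (δ/2), Lfun lam₁ k₁ d₁ w = Lfun lam₂ k₂ d₂ w := by
    intro w hw
    have hz : (2*w) ∈ Set.Ioo (-δ) δ := ⟨by linarith [hw.1], by linarith [hw.2]⟩
    have h1 := hasDerivAt_Hfun lam₁ k₁ d₁ (2*w) (hpos₁ _ hz)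
    have h2 := hasDerivAt_Hfun lam₂ k₂ d₂ (2*w) (hpos₂ _ hz)
    have hev : Hfun lam₂ k₂ d₂ =ᶠ[nhds (2*w)] Hfun lam₁ k₁ d₁ :=
      Filter.eventuallyEq_of_mem (Ioo_mem_nhds hz.1 hz.2)
        (fun z hzz => (hHeq z hzz).symm)
    have huniq := (h1.congr_of_eventuallyEq hev).unique h2
    rwa [show 2*w/2 = w by ring] at huniq
  set s : Finset ℝ := Finset.univ.image lam₁ ∪ Finset.univ.image lam₂ with hsdef
  have hsub₁ : ∀ i, lam₁ i ∈ s := fun i =>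
    Finset.mem_union_left _ (Finset.mem_image_of_mem lam₁ (Finset.mem_univ i))
  have hsub₂ : ∀ j, lam₂ j ∈ s := fun j =>
    Finset.mem_union_right _ (Finset.mem_image_of_mem lam₂ (Finset.mem_univ j))
  have hδt : ∀ t ∈ s, δ/2 ≤ t := by
    intro t ht
    simp only [hsdef, Finset.mem_union, Finset.mem_image, Finset.mem_univ,
      true_and] at ht
    rcases ht with ⟨i, rfl⟩ | ⟨j, rfl⟩
    · linarith [hδ1 i]
    · linarith [hδ2 j]
  have hzero : ∀ w ∈ Set.Ioo (-(δ/2)) (δ/2),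
      ∑ t ∈ s, ((coefA lam₁ k₁ t - coefA lam₂ k₂ t) / (t + w)
        + (coefB lam₁ d₁ t - coefB lam₂ d₂ t) / (t + w) ^ 2) = 0 := by
    intro w hw
    have e1 : ∑ t ∈ s, ((coefA lam₁ k₁ t - coefA lam₂ k₂ t) / (t + w)
        + (coefB lam₁ d₁ t - coefB lam₂ d₂ t) / (t + w) ^ 2)
        = (∑ t ∈ s, (coefA lam₁ k₁ t * (t + w)⁻¹
            + coefB lam₁ d₁ t * ((t + w) ^ 2)⁻¹))
          - ∑ t ∈ s, (coefA lam₂ k₂ t * (t + w)⁻¹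
            + coefB lam₂ d₂ t * ((t + w) ^ 2)⁻¹) := by
      rw [← Finset.sum_sub_distrib]
      refine Finset.sum_congr rfl fun t _ => ?_
      simp only [div_eq_mul_inv]
      ring
    rw [e1, sum_coef_eq_Lfun lam₁ k₁ d₁ s hsub₁ w,
      sum_coef_eq_Lfun lam₂ k₂ d₂ s hsub₂ w, hLw w hw, sub_self]
  have hindep := indep_pair s _ _ (δ/2) (by linarith) hδt hzero
  have key₁ : ∀ i, ∃ j, lam₂ j = lam₁ i ∧ k₂ j = k₁ i ∧ d₂ j = d₁ i := by
    intro i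
    obtain ⟨hA, hB⟩ := hindep (lam₁ i) (hsub₁ i)
    rw [coefA_eval lam₁ k₁ hinj₁ i] at hA
    rw [coefB_eval lam₁ d₁ hinj₁ i] at hB
    by_cases hex : ∃ j, lam₂ j = lam₁ i
    · obtain ⟨j, hj⟩ := hex
      rw [← hj, coefA_eval lam₂ k₂ hinj₂ j] at hA
      rw [← hj, coefB_eval lam₂ d₂ hinj₂ j] at hB
      have hk : k₂ j = k₁ i := by
        have hc : (k₂ j : ℝ) = (k₁ i : ℝ) := by linarith
        exact_mod_cast hc
      have hd2 : d₂ j ^ 2 = d₁ i ^ 2 := by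
        have hne : lam₂ j ^ 2 ≠ 0 := pow_ne_zero _ (hlam₂ j).ne'
        have h' : d₂ j ^ 2 * lam₂ j ^ 2 = d₁ i ^ 2 * lam₂ j ^ 2 := by linarith
        exact mul_right_cancel₀ hne h'
      have hd : d₂ j = d₁ i := by
        rw [← Real.sqrt_sq (hd₂ j), ← Real.sqrt_sq (hd₁ i), hd2]
      exact ⟨j, hj, hk, hd⟩
    · push_neg at hex
      rw [coefA_eval_not lam₂ k₂ _ hex] at hA
      exfalso
      have hc : (k₁ i : ℝ) = 0 := by linarith
      exact (hk₁ i).ne' (by exact_mod_cast hc)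
  have key₂ : ∀ j, ∃ i, lam₁ i = lam₂ j := by
    intro j
    by_cases hex : ∃ i, lam₁ i = lam₂ j
    · exact hex
    · obtain ⟨hA, _⟩ := hindep (lam₂ j) (hsub₂ j)
      push_neg at hex
      rw [coefA_eval_not lam₁ k₁ _ hex, coefA_eval lam₂ k₂ hinj₂ j] at hA
      exfalso
      have hc : (k₂ j : ℝ) = 0 := by linarith
      exact (hk₂ j).ne' (by exact_mod_cast hc)
  choose f hf1 hf2 hf3 using key₁
  choose g hg using key₂
  refine ⟨⟨f, g, fun i => hinj₁ ?_, fun j => hinj₂ ?_⟩, fun i => ⟨hf1 i, hf2 i, hf3 i⟩⟩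
  · rw [hg (f i), hf1 i]
  · rw [hf1 (g j), hg j]
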